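/- There exists an Int-sheaf of real vector spaces that is controllable to 0 but not controllable. -/

import Mathlib

noncomputable section

/-- An `Int`-presheaf of real vector spaces: to every compact interval `[a,b] ⊆ ℝ`
(`a ≤ b`, degenerate intervals allowed) it assigns a real vector space `sec a b`,
with linear restriction maps that are the identity on the interval itself and compose. -/
structure IntPresheaf where
  sec : ℝ → ℝ → Type
  [secAddCommGroup : ∀ a b : ℝ, AddCommGroup (sec a b)]
  [secModule : ∀ a b : ℝ, Module ℝ (sec a b)]
  res : ∀ {a b c d : ℝ}, a ≤ b → b ≤ c → c ≤ d → sec a d → sec b c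
  res_self : ∀ {a b : ℝ} (h : a ≤ b) (w : sec a b), res le_rfl h le_rfl w = w
  res_comp : ∀ {a b c d e f : ℝ} (hab : a ≤ b) (hbc : b ≤ c) (hcd : c ≤ d)
      (hde : d ≤ e) (hef : e ≤ f) (w : sec a f),
      res hbc hcd hde (res hab (hbc.trans (hcd.trans hde)) hef w)
        = res (hab.trans hbc) hcd (hde.trans hef) w
  res_add : ∀ {a b c d : ℝ} (hab : a ≤ b) (hbc : b ≤ c) (hcd : c ≤ d) (w w' : sec a d),
      res hab hbc hcd (w + w') = res hab hbc hcd w + res hab hbc hcd w'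
  res_smul : ∀ {a b c d : ℝ} (hab : a ≤ b) (hbc : b ≤ c) (hcd : c ≤ d) (r : ℝ) (w : sec a d),
      res hab hbc hcd (r • w) = r • res hab hbc hcd w

attribute [instance] IntPresheaf.secAddCommGroup IntPresheaf.secModule

/-- Sections `f ∈ S[a,b]`, `g ∈ S[b,c]`, `h ∈ S[c,d]` are compatible if
`f|[b,b] = g|[b,b]` and `g|[c,c] = h|[c,c]`. -/
def IntPresheaf.Compatible (S : IntPresheaf) {a b c d : ℝ}
    (hab : a ≤ b) (hbc : b ≤ c) (hcd : c ≤ d)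
    (f : S.sec a b) (g : S.sec b c) (h : S.sec c d) : Prop :=
  S.res hab le_rfl le_rfl f = S.res le_rfl le_rfl hbc g ∧
  S.res hbc le_rfl le_rfl g = S.res le_rfl le_rfl hcd h

/-- `S` is controllable. -/
def IntPresheaf.Controllable (S : IntPresheaf) : Prop :=
  ∀ (a b c d : ℝ) (hab : a < b) (hbc : b < c) (hcd : c < d)
    (f : S.sec a b) (h : S.sec c d), ∃ g : S.sec b c,
      S.Compatible hab.le hbc.le hcd.le f g h

/-- `S` is controllable to `0`. -/
def IntPresheaf.ControllableToZero (S : IntPresheaf) : Prop :=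
  ∀ (a b c d : ℝ) (hab : a < b) (hbc : b < c) (hcd : c < d)
    (f : S.sec a b), ∃ g : S.sec b c,
      S.Compatible hab.le hbc.le hcd.le f g (0 : S.sec c d)

/-- `S` satisfies the continuation property. -/
def IntPresheaf.Continuation (S : IntPresheaf) : Prop :=
  ∀ (a b : ℝ) (hab : a < b) (g : S.sec a b),
    ∃ ε : ℝ, ∃ _hε : 0 < ε, ∃ f : S.sec (a - ε) a, ∃ h : S.sec b (b + ε),
      S.Compatible (by linarith) hab.le (by linarith) f g h

/-- An `Int`-sheaf of real vector spaces: an `Int`-presheaf with unique gluing of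
compatible pairs of sections. -/
structure IntSheaf where
  toPresheaf : IntPresheaf
  glue : ∀ {a b c d : ℝ} (hab : a ≤ b) (hbc : b ≤ c) (hcd : c ≤ d)
      (f : toPresheaf.sec a c) (g : toPresheaf.sec b d),
      toPresheaf.res hab hbc le_rfl f = toPresheaf.res le_rfl hbc hcd g →
      ∃! h : toPresheaf.sec a d,
        toPresheaf.res le_rfl (hab.trans hbc) hcd h = f ∧
        toPresheaf.res hab (hbc.trans hcd) le_rfl h = g

/-- The "instantly dying" presheaf: a section on `[a,b]` is a real number (state at the
left endpoint); restriction to `[b,c] ⊆ [a,d]` keeps the state if `b = a`, else kills it. -/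
def deadPresheaf : IntPresheaf where
  sec _ _ := ℝ
  secAddCommGroup := fun _ _ => inferInstance
  secModule := fun _ _ => inferInstance
  res {a b _ _} _ _ _ v := if a = b then v else 0
  res_self _ _ := if_pos rfl
  res_comp := by
    intro a b c d e f hab hbc hcd hde hef w
    by_cases h2 : b = c
    · subst h2; simp
    · have hac : a ≠ c := by
        intro h; subst h; exact h2 (le_antisymm hbc hab)
      simp [h2, hac]
  res_add := by intro a b c d hab hbc hcd w w'; split_ifs <;> simp
  res_smul := by intro a b c d hab hbc hcd r w; split_ifs <;> simp

/-- The corresponding sheaf. -/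
def deadSheaf : IntSheaf where
  toPresheaf := deadPresheaf
  glue := by
    intro a b c d hab hbc hcd f g hfg
    simp only [deadPresheaf] at hfg ⊢
    exact ⟨f, ⟨rfl, by simpa using hfg⟩, fun y hy => by simpa using hy.1⟩

/-- There exists an `Int`-sheaf of real vector spaces that is
controllable to `0` but not controllable. -/
theorem exists_controllableToZero_not_controllable :
    ∃ S : IntSheaf, S.toPresheaf.ControllableToZero ∧ ¬ S.toPresheaf.Controllable := by
  refine ⟨deadSheaf, ?_, ?_⟩
  · intro a b c d hab hbc hcd f
    refine ⟨0, ?_, ?_⟩ <;>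
      simp [deadSheaf, deadPresheaf, hab.ne, hbc.ne] <;> rfl
  · intro hC
    obtain ⟨g, _, h2⟩ := hC 0 1 2 3 (by norm_num) (by norm_num) (by norm_num)
      (0 : ℝ) (1 : ℝ)
    simp only [deadSheaf, deadPresheaf] at h2
    norm_num at h2
    exact one_ne_zero (α := ℝ) (by rw [← h2]; rfl)
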